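/- Let ζ be a primitive p-th root of unity for a prime p ≥ 5, and let ν = (ζ+1)^{p−1} in the ring of integers ℤ[ζ]. Then ν is a unit of infinite multiplicative order in ℤ[ζ]. -/

import Mathlib

private lemma pow_eq_one_nonneg {a : ℝ} (ha : 0 ≤ a) {m : ℕ} (hm : m ≠ 0)
    (h : a ^ m = 1) : a = 1 := by
  rcases lt_trichotomy a 1 with hlt | heq | hgt
  · have := pow_lt_one₀ ha hlt hm
    simp [h] at this
  · exact heq
  · have := one_lt_pow₀ hgt hm
    simp [h] at this

theorem cyclotomic_unit_infinite_order (p : ℕ) (hp : p.Prime) (hp5 : 5 ≤ p)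
    (ζ : ℂ) (hζ : IsPrimitiveRoot ζ p) :
    (ζ + 1) ^ (p - 1) ∈ Algebra.adjoin ℤ ({ζ} : Set ℂ) ∧
    (∃ μ ∈ Algebra.adjoin ℤ ({ζ} : Set ℂ), (ζ + 1) ^ (p - 1) * μ = 1) ∧
    ¬ IsOfFinOrder ((ζ + 1) ^ (p - 1)) := by
  have hζmem : ζ ∈ Algebra.adjoin ℤ ({ζ} : Set ℂ) :=
    Algebra.subset_adjoin (Set.mem_singleton ζ)
  have hppow : ζ ^ p = 1 := hζ.pow_eq_one
  have hζne1 : ζ ≠ 1 := hζ.ne_one (by omega)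
  have hodd : Odd p := hp.odd_of_ne_two (by omega)
  refine ⟨pow_mem (add_mem hζmem (one_mem _)) _, ?_, ?_⟩
  · set k := (p + 1) / 2 with hk
    have h2k : 2 * k = p + 1 := by
      obtain ⟨m, hm⟩ := hodd; omega
    set S : ℂ := ∑ j ∈ Finset.range k, (ζ ^ 2) ^ j with hS
    have hSmul : (ζ + 1) * S = 1 := by
      have hgeom := geom_sum_mul (ζ ^ 2) k
      have hz2k : (ζ ^ 2) ^ k = ζ := by
        rw [← pow_mul, h2k, pow_succ, hppow, one_mul]
      have hne : ζ - 1 ≠ 0 := sub_ne_zero.mpr hζne1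
      have hmain : ((ζ + 1) * S) * (ζ - 1) = 1 * (ζ - 1) := by
        rw [one_mul]
        calc ((ζ + 1) * S) * (ζ - 1) = S * (ζ ^ 2 - 1) := by ring
          _ = (ζ ^ 2) ^ k - 1 := hgeom
          _ = ζ - 1 := by rw [hz2k]
      exact mul_right_cancel₀ hne hmain
    refine ⟨S ^ (p - 1),
      pow_mem (Subalgebra.sum_mem _ fun j _ => pow_mem (pow_mem hζmem 2) j) _, ?_⟩
    rw [← mul_pow, hSmul, one_pow]
  · intro hfin
    obtain ⟨n, hn, hpow⟩ := isOfFinOrder_iff_pow_eq_one.mp hfin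
    have habs : ‖ζ + 1‖ ^ ((p - 1) * n) = 1 := by
      have := congrArg (‖·‖) hpow
      simpa [norm_pow, ← pow_mul] using this
    have habs1 : ‖ζ + 1‖ = 1 :=
      pow_eq_one_nonneg (norm_nonneg _)
        (Nat.mul_ne_zero (by omega) hn.ne') habs
    have habsζ : ‖ζ‖ = 1 := by
      refine pow_eq_one_nonneg (norm_nonneg _) (by omega : p ≠ 0) ?_
      have := congrArg (‖·‖) hppow
      simpa [norm_pow] using this
    have h1 : (ζ + 1) * (starRingEnd ℂ ζ + 1) = 1 := by
      have := Complex.mul_conj (ζ + 1)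
      rw [map_add, map_one] at this
      rw [this, ← Complex.sq_norm, habs1]
      norm_num
    have h2 : ζ * starRingEnd ℂ ζ = 1 := by
      rw [Complex.mul_conj, ← Complex.sq_norm, habsζ]
      norm_num
    have hquad : ζ ^ 2 + ζ + 1 = 0 := by
      linear_combination ζ * h1 - (ζ + 1) * h2
    have h3 : ζ ^ 3 = 1 := by linear_combination (ζ - 1) * hquad
    have hdvd : p ∣ 3 := hζ.dvd_of_pow_eq_one 3 h3
    have := Nat.le_of_dvd (by norm_num) hdvd
    omega
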